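/- A partition μ with non-repeating odd parts, with 2-modular Durfee square size k ≥ 1 and 2-modular successive rank vector (r_1, ..., r_k), is a minimal basis partition if and only if: (a) no row of its 2-modular Ferrers graph strictly below the Durfee square is equal in length (number of entries) to a column of the graph strictly to the right of the Durfee square, and (b) if r_k = 0 then the entry in position (k,k) of the Durfee square is 1. -/

import Mathlib

open Finset
open scoped Classical

namespace BasisPartitions

/-! ### Ordinary partitions -/

/-- The parts of a partition, listed in weakly decreasing order. -/
def sparts {n : ℕ} (π : n.Partition) : List ℕ := π.parts.sort (· ≥ ·)

/-- `conj L j` is the number of parts that are `≥ j`, i.e. the `j`-th part of the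
conjugate partition (for `j ≥ 1`). -/
def conj (L : List ℕ) (j : ℕ) : ℕ := L.countP (fun b => j ≤ b)

/-- The Durfee square size: the largest `k` such that the `k`-th part is `≥ k`. -/
def durfee (L : List ℕ) : ℕ := (List.range L.length).countP (fun i => i + 1 ≤ L.getD i 0)

/-- The `(i+1)`-st successive rank `r_{i+1} = b_{i+1} - c_{i+1}` (0-indexed `i`). -/
def rank (L : List ℕ) (i : ℕ) : ℤ := (L.getD i 0 : ℤ) - (conj L (i + 1) : ℤ)

/-- The successive rank vector `(r_1, ..., r_k)` where `k` is the Durfee square size. -/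
def ranks (L : List ℕ) : List ℤ := (List.range (durfee L)).map (rank L)

/-- A basis partition: the partitioned number is minimal among all partitions having
the same successive rank vector. -/
def IsBasis {n : ℕ} (π : n.Partition) : Prop :=
  ∀ (m : ℕ) (π' : m.Partition), ranks (sparts π') = ranks (sparts π) → n ≤ m

/-- The signature: the number of distinct part sizes below the Durfee square. -/
def sig (L : List ℕ) : ℕ := ((L.drop (durfee L)).dedup).length

/-- `b(n;k)`: the number of basis partitions of `n` with Durfee square size `k`. -/
noncomputable def bCount (n k : ℕ) : ℕ :=
  Nat.card {π : n.Partition // IsBasis π ∧ durfee (sparts π) = k}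

/-- `b(n,k,s)`: the number of basis partitions of `n` with Durfee square size `k`
and signature `s`. -/
noncomputable def bCount3 (n k s : ℕ) : ℕ :=
  Nat.card {π : n.Partition // IsBasis π ∧ durfee (sparts π) = k ∧ sig (sparts π) = s}

/-- `B(n;j)`: the number of basis partitions of `n` with signature `j`. -/
noncomputable def BCount (n j : ℕ) : ℕ :=
  Nat.card {π : n.Partition // IsBasis π ∧ sig (sparts π) = j}

/-- Rogers–Ramanujan condition: exactly `k` parts, consecutive gaps `≥ 2`, last part `≥ 1`. -/
def RR (L : List ℕ) (k : ℕ) : Prop :=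
  L.length = k ∧ (∀ i, i + 1 < k → L.getD (i + 1) 0 + 2 ≤ L.getD i 0) ∧ 1 ≤ L.getD (k - 1) 0

/-- `t(π)` for a Rogers–Ramanujan partition: the number of gaps `> 2`, plus 1 if the
last part is `> 1`. -/
def tRR (L : List ℕ) (k : ℕ) : ℕ :=
  ((Finset.range (k - 1)).filter (fun i => L.getD (i + 1) 0 + 2 < L.getD i 0)).card +
    (if 1 < L.getD (k - 1) 0 then 1 else 0)

/-- Primary condition: exactly `k` parts, each part `≥ k`. -/
def Primary (L : List ℕ) (k : ℕ) : Prop := L.length = k ∧ ∀ x ∈ L, k ≤ x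

/-- `t(π)` for a primary partition: the number of strict descents, plus 1 if the
last part is `> k`. -/
def tP (L : List ℕ) (k : ℕ) : ℕ :=
  ((Finset.range (k - 1)).filter (fun i => L.getD (i + 1) 0 < L.getD i 0)).card +
    (if k < L.getD (k - 1) 0 then 1 else 0)

/-- A complete basis partition: every `j` with `1 ≤ j ≤ k-1` occurs as a part of `π_b`
(a row below the Durfee square) or as a part of `π_r` (a column length strictly to the
right of the Durfee square). -/
def IsComplete {n : ℕ} (π : n.Partition) : Prop :=
  ∀ j : ℕ, 1 ≤ j → j < durfee (sparts π) →
    j ∈ (sparts π).drop (durfee (sparts π)) ∨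
      ∃ c : ℕ, durfee (sparts π) < c ∧ conj (sparts π) c = j

/-- `b_c(n)`: the number of complete basis partitions of `n`. -/
noncomputable def bc (n : ℕ) : ℕ := Nat.card {π : n.Partition // IsBasis π ∧ IsComplete π}

/-! ### Partitions with non-repeating odd parts and their 2-modular graphs -/

/-- Partitions with non-repeating (distinct) odd parts. -/
def Pod {n : ℕ} (π : n.Partition) : Prop := ∀ x, Odd x → π.parts.count x ≤ 1

/-- The size (sum of entries) of the `c`-th column (1-indexed) of the 2-modular graph. -/
def mcolSize (L : List ℕ) (c : ℕ) : ℕ :=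
  (L.map (fun x => if 2 * c ≤ x then 2 else if x = 2 * c - 1 then 1 else 0)).sum

/-- The length (number of entries) of the `c`-th column (1-indexed) of the 2-modular graph. -/
def mcolLen (L : List ℕ) (c : ℕ) : ℕ := L.countP (fun x => 2 * c - 1 ≤ x)

/-- The number of entries in a row of the 2-modular graph recording the part `x`,
namely `⌈x/2⌉`. -/
def mrowLen (x : ℕ) : ℕ := (x + 1) / 2

/-- The 2-modular Durfee square size: the largest `k` with `⌈b_k/2⌉ ≥ k`. -/
def mdurfee (L : List ℕ) : ℕ := (List.range L.length).countP (fun i => 2 * i + 1 ≤ L.getD i 0)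

/-- The `(i+1)`-st 2-modular successive rank: (size of row `i+1`) − (size of column `i+1`). -/
def mrank (L : List ℕ) (i : ℕ) : ℤ := (L.getD i 0 : ℤ) - (mcolSize L (i + 1) : ℤ)

/-- The 2-modular successive rank vector. -/
def mranks (L : List ℕ) : List ℤ := (List.range (mdurfee L)).map (mrank L)

/-- A minimal basis partition in `P_{o,d}`: the partitioned number is minimal among all
partitions with non-repeating odd parts having the same 2-modular successive rank vector. -/
def MinBasis {n : ℕ} (μ : n.Partition) : Prop :=
  Pod μ ∧ ∀ (m : ℕ) (μ' : m.Partition), Pod μ' →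
    mranks (sparts μ') = mranks (sparts μ) → n ≤ m

/-- A basis partition in `P_{o,d}`: no row of the 2-modular graph strictly below the Durfee
square has size equal to the size of a column strictly to the right of the Durfee square. -/
def PodBasis {n : ℕ} (π : n.Partition) : Prop :=
  Pod π ∧ ∀ i, mdurfee (sparts π) ≤ i → i < (sparts π).length →
    ∀ c, mdurfee (sparts π) < c → mcolSize (sparts π) c ≠ (sparts π).getD i 0

/-- The signature of a basis partition in `P_{o,d}`: the number of distinct sizes among the
rows of the 2-modular graph strictly below the Durfee square. -/
def msig (L : List ℕ) : ℕ := ((L.drop (mdurfee L)).dedup).length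

/-- The ℓ-signature: the number of distinct lengths among the rows of the 2-modular
graph strictly below the Durfee square. -/
def lsig (L : List ℕ) : ℕ := (((L.drop (mdurfee L)).map mrowLen).dedup).length

/-- `b(n;j)` for `P_{o,d}`: the number of basis partitions of `n` in `P_{o,d}` with
signature `j`. -/
noncomputable def podB (n j : ℕ) : ℕ := Nat.card {π : n.Partition // PodBasis π ∧ msig (sparts π) = j}

/-- The number of odd parts. -/
def numOdd (L : List ℕ) : ℕ := L.countP (fun x => x % 2 = 1)

/-- A special partition: distinct parts with consecutive differences `≥ 4`, where a
difference equal to `4` is permitted only when both parts are even. -/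
def Special (L : List ℕ) : Prop :=
  ∀ i, i + 1 < L.length →
    L.getD (i + 1) 0 + 4 ≤ L.getD i 0 ∧
      (L.getD i 0 = L.getD (i + 1) 0 + 4 → Even (L.getD i 0) ∧ Even (L.getD (i + 1) 0))

/-- The `i`-th part of a special partition, with the convention that the part just after
the last one is `-2`. -/
def hpart (L : List ℕ) (i : ℕ) : ℤ := if i < L.length then (L.getD i 0 : ℤ) else -2

/-- `ℓ(π)`: the number of gaps `> 4` in a special partition, with the convention
`h_{k+1} = -2`. -/
def ell (L : List ℕ) : ℕ :=
  ((Finset.range L.length).filter (fun i => 4 < hpart L i - hpart L (i + 1))).card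



/-! ### Auxiliary infrastructure for the proof of statement16 -/

section Infra

/-- A good list: sorted decreasing, positive entries, odd entries distinct. -/
def Good (L : List ℕ) : Prop :=
  L.Pairwise (· ≥ ·) ∧ (∀ x ∈ L, 0 < x) ∧ (∀ x, Odd x → L.count x ≤ 1)

lemma getD_eq_getElem' (L : List ℕ) {i : ℕ} (h : i < L.length) : L.getD i 0 = L[i] :=
  List.getD_eq_getElem L 0 h

lemma getD_anti {L : List ℕ} (hs : L.Pairwise (· ≥ ·)) {i j : ℕ} (hij : i ≤ j) :
    L.getD j 0 ≤ L.getD i 0 := by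
  by_cases hj : j < L.length
  · have hi : i < L.length := lt_of_le_of_lt hij hj
    rw [getD_eq_getElem' L hj, getD_eq_getElem' L hi]
    rcases eq_or_lt_of_le hij with rfl | hlt
    · exact le_refl _
    · exact (List.pairwise_iff_getElem.1 hs) i j hi hj hlt
  · rw [List.getD_eq_default _ _ (le_of_not_gt hj)]
    exact Nat.zero_le _

lemma getD_mem {L : List ℕ} {i : ℕ} (h : i < L.length) : L.getD i 0 ∈ L := by
  rw [getD_eq_getElem' L h]; exact List.getElem_mem h

/-- Threshold counting in a sorted (decreasing) list. -/
lemma sorted_countP_iff {L : List ℕ} (hs : L.Pairwise (· ≥ ·)) (v : ℕ) (hv : 0 < v) :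
    ∀ i : ℕ, (i < L.countP (fun x => v ≤ x) ↔ i < L.length ∧ v ≤ L.getD i 0) := by
  induction L with
  | nil => intro i; simp
  | cons a t ih =>
    intro i
    have hs' : t.Pairwise (· ≥ ·) := hs.of_cons
    have ha : ∀ x ∈ t, x ≤ a := fun x hx => List.rel_of_pairwise_cons hs hx
    rw [List.countP_cons]
    cases i with
    | zero =>
      by_cases h : v ≤ a
      · simp [h, List.getD]
      · have h0 : t.countP (fun x => v ≤ x) = 0 := by
          rw [List.countP_eq_zero]
          intro x hx
          simp only [decide_eq_true_eq]
          intro hvx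
          exact h (le_trans hvx (ha x hx))
        simp [h, h0, List.getD]
      
    | succ i' =>
      have hih := ih hs' i'
      have hle : t.getD i' 0 ≤ a := by
        by_cases hi' : i' < t.length
        · exact ha _ (getD_mem hi')
        · rw [List.getD_eq_default _ _ (le_of_not_gt hi')]; exact Nat.zero_le a
      by_cases h : v ≤ a
      · simp only [h, List.length_cons, List.getD_cons_succ, decide_eq_true_eq, if_pos]
        omega
      · have h0 : t.countP (fun x => v ≤ x) = 0 := by
          rw [List.countP_eq_zero]
          intro x hx
          simp only [decide_eq_true_eq]
          intro hvx
          exact h (le_trans hvx (ha x hx))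
        simp only [h, List.length_cons, List.getD_cons_succ, decide_eq_true_eq, if_false, h0]
        omega

lemma countP_eq_of_boundary {L : List ℕ} (hs : L.Pairwise (· ≥ ·)) {v m : ℕ} (hv : 0 < v)
    (hm : m ≤ L.length) (h1 : ∀ i < m, v ≤ L.getD i 0)
    (h2 : m < L.length → L.getD m 0 < v) :
    L.countP (fun x => v ≤ x) = m := by
  have H := sorted_countP_iff hs v hv
  by_contra hne
  rcases lt_or_gt_of_ne hne with hlt | hgt
  · have := (H (L.countP (fun x => v ≤ x))).2
    have hcm : L.countP (fun x => v ≤ x) < m := hlt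
    have := this ⟨lt_of_lt_of_le hcm hm, h1 _ hcm⟩
    omega
  · have := (H m).1 hgt
    have := h2 this.1
    omega

end Infra


section Infra2

lemma mdurfee_lt_iff {L : List ℕ} (hs : L.Pairwise (· ≥ ·)) :
    ∀ i : ℕ, (i < mdurfee L ↔ i < L.length ∧ 2 * i + 1 ≤ L.getD i 0) := by
  intro i
  have hdc : ∀ a b : ℕ, a ≤ b → 2*b+1 ≤ L.getD b 0 → 2*a+1 ≤ L.getD a 0 := by
    intro a b hab hq
    have := getD_anti hs hab
    omega
  unfold mdurfee
  rw [List.countP_eq_length_filter]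
  constructor
  · intro hi
    by_contra hcon
    have hsub : (List.range L.length).filter (fun j => 2*j+1 ≤ L.getD j 0) ⊆ List.range i := by
      intro j hj
      rw [List.mem_filter, List.mem_range] at hj
      rw [List.mem_range]
      by_contra hji
      push_neg at hji
      exact hcon ⟨lt_of_le_of_lt hji hj.1,
        hdc i j hji (by simpa using hj.2)⟩
    have := ((List.nodup_range.filter _).subperm hsub).length_le
    rw [List.length_range] at this
    omega
  · rintro ⟨hlen, hq⟩
    have hsub : List.range (i+1) ⊆ (List.range L.length).filter (fun j => 2*j+1 ≤ L.getD j 0) := by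
      intro j hj
      rw [List.mem_range] at hj
      rw [List.mem_filter, List.mem_range]
      exact ⟨by omega, by simpa using hdc j i (by omega) hq⟩
    have := (List.nodup_range.subperm hsub).length_le
    rw [List.length_range] at this
    omega

lemma mdurfee_le_length (L : List ℕ) : mdurfee L ≤ L.length := by
  unfold mdurfee
  calc (List.range L.length).countP _ ≤ (List.range L.length).length := List.countP_le_length
  _ = L.length := List.length_range

lemma mdurfee_eq_of {L : List ℕ} (hs : L.Pairwise (· ≥ ·)) {k : ℕ} (hlen : k ≤ L.length)
    (h1 : ∀ j < k, 2*j+1 ≤ L.getD j 0)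
    (h2 : k < L.length → L.getD k 0 ≤ 2*k) : mdurfee L = k := by
  have H := mdurfee_lt_iff hs
  have A : mdurfee L ≤ k := by
    by_contra h
    push_neg at h
    have h3 := (H k).1 h
    have := h2 h3.1
    omega
  have B : k ≤ mdurfee L := by
    rcases Nat.eq_zero_or_pos k with rfl | hk
    · omega
    · have := (H (k-1)).2 ⟨by omega, h1 _ (by omega)⟩
      omega
  omega

lemma mcolSize_decomp (L : List ℕ) (c : ℕ) (hc : 0 < c) :
    mcolSize L c = 2 * L.countP (fun x => 2*c ≤ x) + L.countP (fun x => x = 2*c-1) := by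
  induction L with
  | nil => simp [mcolSize]
  | cons a t ih =>
    simp only [mcolSize, List.map_cons, List.sum_cons, List.countP_cons] at ih ⊢
    simp only [decide_eq_true_eq]
    split_ifs <;> omega

lemma mcolLen_eq (L : List ℕ) (c : ℕ) (hc : 0 < c) :
    mcolLen L c = L.countP (fun x => 2*c ≤ x) + L.countP (fun x => x = 2*c-1) := by
  unfold mcolLen
  induction L with
  | nil => simp
  | cons a t ih =>
    simp only [List.countP_cons] at ih ⊢
    simp only [decide_eq_true_eq]
    split_ifs <;> omega

lemma mrowLen_ge_iff (x m : ℕ) (hm : 0 < m) : (m ≤ mrowLen x) ↔ 2*m - 1 ≤ x := by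
  unfold mrowLen; omega

lemma mrowLen_le_iff (x m : ℕ) : (mrowLen x ≤ m) ↔ x ≤ 2*m := by
  unfold mrowLen; omega

lemma mrowLen_eq_iff (x m : ℕ) (hm : 0 < m) : (mrowLen x = m) ↔ (x = 2*m - 1 ∨ x = 2*m) := by
  unfold mrowLen; omega

lemma getD_drop (L : List ℕ) (k i : ℕ) : (L.drop k).getD i 0 = L.getD (k+i) 0 := by
  by_cases h : k + i < L.length
  · have h1 : i < (L.drop k).length := by rw [List.length_drop]; omega
    rw [getD_eq_getElem' _ h1, getD_eq_getElem' _ h, List.getElem_drop]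
  · rw [List.getD_eq_default, List.getD_eq_default] <;> [skip; rw [List.length_drop]] <;> omega

lemma mem_drop_index {L : List ℕ} {k x : ℕ} (h : x ∈ L.drop k) :
    ∃ i, k ≤ i ∧ i < L.length ∧ L.getD i 0 = x := by
  rcases List.mem_iff_getElem.1 h with ⟨j, hj, hx⟩
  have hlen : k + j < L.length := by
    rw [List.length_drop] at hj; omega
  refine ⟨k + j, Nat.le_add_right _ _, hlen, ?_⟩
  rw [getD_eq_getElem' _ hlen, ← List.getElem_drop (h := hj), hx]

lemma two_le_count_of_getD {L : List ℕ} {i j : ℕ} (hij : i < j) (hj : j < L.length)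
    (h : L.getD i 0 = L.getD j 0) : 2 ≤ L.count (L.getD i 0) := by
  have hx1 : L.getD i 0 ∈ L.take j := by
    have hi : i < (L.take j).length := by rw [List.length_take]; omega
    have he : (L.take j).getD i 0 = L.getD i 0 := by
      rw [getD_eq_getElem' _ hi, getD_eq_getElem' _ (by omega : i < L.length), List.getElem_take]
    rw [← he]; exact getD_mem hi
  have hx2 : L.getD i 0 ∈ L.drop j := by
    rw [h]
    have hj0 : 0 < (L.drop j).length := by rw [List.length_drop]; omega
    have he : (L.drop j).getD 0 0 = L.getD j 0 := by
      rw [getD_eq_getElem' _ hj0, getD_eq_getElem' _ hj, List.getElem_drop]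
      simp
    rw [← he]; exact getD_mem hj0
  have := List.count_pos_iff.2 hx1
  have := List.count_pos_iff.2 hx2
  have hc : L.count (L.getD i 0) = (L.take j).count (L.getD i 0) + (L.drop j).count (L.getD i 0) := by
    rw [← List.count_append, List.take_append_drop]
  omega

end Infra2


section Infra3

/-- Entry of the 2-modular Ferrers graph in column `c` for a part `x`. -/
def ent (c x : ℕ) : ℕ := if 2 * c ≤ x then 2 else if x = 2 * c - 1 then 1 else 0

lemma mcolSize_eq_map (L : List ℕ) (c : ℕ) : mcolSize L c = (L.map (ent c)).sum := rfl

lemma sum_map_set (f : ℕ → ℕ) (l : List ℕ) (j y : ℕ) (h : j < l.length) :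
    ((l.set j y).map f).sum + f (l.getD j 0) = (l.map f).sum + f y := by
  induction l generalizing j with
  | nil => simp at h
  | cons a t ih =>
    cases j with
    | zero => simp [List.getD]; omega
    | succ j' =>
      simp only [List.set_cons_succ, List.map_cons, List.sum_cons, List.getD_cons_succ]
      have := ih j' (by simpa using h)
      omega

lemma sum_set'' (l : List ℕ) (j y : ℕ) (h : j < l.length) :
    (l.set j y).sum + l.getD j 0 = l.sum + y := by
  have := sum_map_set id l j y h
  simpa using this

lemma mcolSize_set {L : List ℕ} {j y : ℕ} (c : ℕ) (h : j < L.length) :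
    mcolSize (L.set j y) c + ent c (L.getD j 0) = mcolSize L c + ent c y := by
  rw [mcolSize_eq_map, mcolSize_eq_map]
  exact sum_map_set (ent c) L j y h

lemma countP_eq_sum_map (p : ℕ → Bool) (l : List ℕ) :
    l.countP p = (l.map (fun z => if p z then 1 else 0)).sum := by
  induction l with
  | nil => simp
  | cons a t ih => simp [List.countP_cons, ih]; omega

lemma countP_set {l : List ℕ} {j y : ℕ} (h : j < l.length) (p : ℕ → Bool) :
    (l.set j y).countP p + (if p (l.getD j 0) then 1 else 0)
      = l.countP p + (if p y then 1 else 0) := by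
  rw [countP_eq_sum_map, countP_eq_sum_map]
  exact sum_map_set _ l j y h

lemma countP_eq_count (l : List ℕ) (v : ℕ) : l.countP (fun x => x = v) = l.count v := by
  rw [List.count_eq_countP]
  exact List.countP_congr (fun x _ => by simp)

lemma count_set {l : List ℕ} {j y : ℕ} (h : j < l.length) (x : ℕ) :
    (l.set j y).count x + (if l.getD j 0 = x then 1 else 0)
      = l.count x + (if y = x then 1 else 0) := by
  rw [← countP_eq_count, ← countP_eq_count]
  have := countP_set (y := y) h (fun z => z = x)
  simpa using this

lemma getD_set {l : List ℕ} {j y : ℕ} (i : ℕ) (hj : j < l.length) :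
    (l.set j y).getD i 0 = if j = i then y else l.getD i 0 := by
  by_cases hi : i < l.length
  · rw [getD_eq_getElem' _ (by simpa using hi), List.getElem_set]
    split_ifs
    · rfl
    · exact (getD_eq_getElem' _ hi).symm
  · have h1 : ¬ j = i := by omega
    rw [if_neg h1, List.getD_eq_default _ _ (by simpa using le_of_not_gt hi),
      List.getD_eq_default _ _ (le_of_not_gt hi)]

lemma sorted_set {l : List ℕ} (hs : l.Pairwise (· ≥ ·)) {j y : ℕ} (hj : j < l.length)
    (hup : ∀ t, t < j → y ≤ l.getD t 0) (hdown : ∀ t, j < t → t < l.length → l.getD t 0 ≤ y) :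
    (l.set j y).Pairwise (· ≥ ·) := by
  rw [List.pairwise_iff_getElem] at hs ⊢
  intro a b ha hb hab
  simp only [List.length_set] at ha hb
  rw [List.getElem_set, List.getElem_set]
  split_ifs with h1 h2 h2
  · omega
  · have := hdown b (by omega) hb
    rwa [getD_eq_getElem' _ hb] at this
  · have := hup a (by omega)
    rwa [getD_eq_getElem' _ ha] at this
  · exact hs a b ha hb hab

lemma pos_of_getD {l : List ℕ} (h : ∀ i, i < l.length → 0 < l.getD i 0) : ∀ x ∈ l, 0 < x := by
  intro x hx
  rcases List.mem_iff_getElem.1 hx with ⟨i, hi, rfl⟩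
  have := h i hi
  rwa [getD_eq_getElem' _ hi] at this

lemma mranks_eq_of {L M : List ℕ} (h1 : mdurfee L = mdurfee M)
    (h2 : ∀ j < mdurfee M, mrank L j = mrank M j) : mranks L = mranks M := by
  unfold mranks
  rw [h1]
  exact List.map_congr_left (fun a ha => h2 a (List.mem_range.1 ha))

lemma countP_le_split (l : List ℕ) (v : ℕ) :
    l.countP (fun x => v ≤ x) = l.countP (fun x => v + 1 ≤ x) + l.countP (fun x => x = v) := by
  induction l with
  | nil => simp
  | cons a t ih =>
    simp only [List.countP_cons, decide_eq_true_eq]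
    split_ifs <;> omega

lemma countP_ge_add_eq {l : List ℕ} {v : ℕ} (hv : ∀ x ∈ l, v ≤ x) :
    l.countP (fun x => v + 1 ≤ x) + l.countP (fun x => x = v) = l.length := by
  induction l with
  | nil => simp
  | cons a t ih =>
    have ha := hv a (by simp)
    have ih' := ih (fun x hx => hv x (by simp [hx]))
    simp only [List.countP_cons, decide_eq_true_eq, List.length_cons]
    split_ifs <;> omega

lemma countP_congr' {l : List ℕ} {p q : ℕ → Bool} (h : ∀ x ∈ l, (p x = true ↔ q x = true)) :
    l.countP p = l.countP q := List.countP_congr h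

end Infra3

section Struct

/-- number of columns the `j`-th row (1-indexed) extends to the right of the `k`-Durfee square -/
def uu (L : List ℕ) (k j : ℕ) : ℕ := mrowLen (L.getD (j-1) 0) - k

/-- length of the `j`-th column below the `k`-Durfee square -/
def vv (L : List ℕ) (k j : ℕ) : ℕ := (L.drop k).countP (fun x => 2*j - 1 ≤ x)

/-- whether `2j-1` occurs as a part below the `k`-Durfee square -/
def ww (L : List ℕ) (k j : ℕ) : ℕ := (L.drop k).countP (fun x => x = 2*j - 1)

/-- whether the corner entry of the Durfee square is a 1 -/
def eps (L : List ℕ) (k : ℕ) : ℕ := if L.getD (k-1) 0 = 2*k - 1 then 1 else 0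

/-- Condition (a) -/
def CondA (L : List ℕ) (k : ℕ) : Prop :=
  ∀ i, k ≤ i → i < L.length → ∀ c, k < c → mcolLen L c ≠ mrowLen (L.getD i 0)

/-- Condition (b) -/
def CondB (L : List ℕ) (k : ℕ) : Prop :=
  mrank L (k - 1) = 0 → L.getD (k - 1) 0 = 2 * k - 1

variable {L : List ℕ} {k : ℕ}

lemma top_val (hs : L.Pairwise (· ≥ ·)) (hkd : mdurfee L = k) (hk : 1 ≤ k)
    {j : ℕ} (h1 : 1 ≤ j) (h2 : j ≤ k) :
    2*k - 1 ≤ L.getD (j-1) 0 ∧ j - 1 < L.length ∧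
      L.getD (j-1) 0 = 2*(k + uu L k j) - (L.getD (j-1) 0) % 2 := by
  have H := (mdurfee_lt_iff hs (k-1)).1 (by omega)
  have hanti := getD_anti hs (show j-1 ≤ k-1 by omega)
  have hlen : j - 1 < L.length := by omega
  refine ⟨by omega, hlen, ?_⟩
  unfold uu mrowLen
  omega

lemma bot_le_2k (hs : L.Pairwise (· ≥ ·)) (hkd : mdurfee L = k) :
    ∀ i, k ≤ i → L.getD i 0 ≤ 2*k := by
  intro i hi
  have H := mdurfee_lt_iff hs k
  rw [hkd] at H
  have hnk : ¬ (k < k) := lt_irrefl k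
  by_cases hkl : k < L.length
  · have : ¬ (2*k+1 ≤ L.getD k 0) := fun h => hnk (H.2 ⟨hkl, h⟩)
    have := getD_anti hs hi
    omega
  · by_cases hil : i < L.length
    · omega
    · rw [List.getD_eq_default _ _ (le_of_not_gt hil)]; omega

lemma bot_mem_le_2k (hs : L.Pairwise (· ≥ ·)) (hkd : mdurfee L = k) :
    ∀ x ∈ L.drop k, x ≤ 2*k := by
  intro x hx
  rcases mem_drop_index hx with ⟨i, hki, hil, rfl⟩
  exact bot_le_2k hs hkd i hki

lemma uu_anti (hs : L.Pairwise (· ≥ ·)) {j j' : ℕ} (h : j ≤ j') : uu L k j' ≤ uu L k j := by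
  unfold uu
  have := getD_anti hs (show j - 1 ≤ j' - 1 by omega)
  unfold mrowLen
  omega

lemma uu_succ_k_eq_zero (hs : L.Pairwise (· ≥ ·)) (hkd : mdurfee L = k) (hk : 1 ≤ k) :
    uu L k (k+1) = 0 := by
  unfold uu
  have := bot_le_2k hs hkd k (le_refl k)
  simp only [Nat.add_sub_cancel]
  unfold mrowLen
  omega

lemma vv_anti {j j' : ℕ} (h1 : 1 ≤ j) (h : j ≤ j') : vv L k j' ≤ vv L k j := by
  unfold vv
  apply List.countP_mono_left
  intro x _
  simp only [decide_eq_true_eq]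
  omega

lemma vv_succ_k_eq_zero (hs : L.Pairwise (· ≥ ·)) (hkd : mdurfee L = k) :
    vv L k (k+1) = 0 := by
  unfold vv
  rw [List.countP_eq_zero]
  intro x hx
  have := bot_mem_le_2k hs hkd x hx
  simp only [decide_eq_true_eq]
  omega

lemma vv_split_eq (hj : 1 ≤ k ∨ True) {j : ℕ} (h1 : 1 ≤ j) :
    vv L k j = vv L k (j+1) + ww L k j + (L.drop k).countP (fun x => x = 2*j) := by
  unfold vv ww
  have e1 := countP_le_split (L.drop k) (2*j - 1)
  have e2 := countP_le_split (L.drop k) (2*j)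
  have c1 : (L.drop k).countP (fun x => 2*j - 1 + 1 ≤ x) = (L.drop k).countP (fun x => 2*j ≤ x) := by
    apply countP_congr'
    intro x _
    simp only [decide_eq_true_eq]
    omega
  have c2 : (L.drop k).countP (fun x => 2*j + 1 ≤ x) = (L.drop k).countP (fun x => 2*(j+1) - 1 ≤ x) := by
    apply countP_congr'
    intro x _
    simp only [decide_eq_true_eq]
    omega
  omega

lemma ww_le_vv_sub {j : ℕ} (h1 : 1 ≤ j) : vv L k (j+1) + ww L k j ≤ vv L k j := by
  have := vv_split_eq (Or.inr trivial) (L := L) (k := k) h1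
  omega

lemma ww_le_one (hpod : ∀ x, Odd x → L.count x ≤ 1) {j : ℕ} (h1 : 1 ≤ j) : ww L k j ≤ 1 := by
  unfold ww
  have hsub : (L.drop k).countP (fun x => x = 2*j-1) ≤ L.countP (fun x => x = 2*j-1) :=
    (List.drop_sublist k L).countP_le
  rw [countP_eq_count (L.drop k), countP_eq_count L] at hsub
  rw [countP_eq_count]
  have := hpod (2*j-1) ⟨j-1, by omega⟩
  omega

/-- The fundamental column-size formula. -/
lemma mcolSize_formula (hs : L.Pairwise (· ≥ ·)) (hpod : ∀ x, Odd x → L.count x ≤ 1)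
    (hkd : mdurfee L = k) (hk : 1 ≤ k) {j : ℕ} (h1 : 1 ≤ j) (h2 : j ≤ k) :
    mcolSize L j + (if j = k then eps L k else 0) + ww L k j = 2*k + 2 * vv L k j := by
  have hklen : k ≤ L.length := hkd ▸ mdurfee_le_length L
  have htake_len : (L.take k).length = k := by rw [List.length_take]; omega
  have htop : ∀ x ∈ L.take k, 2*k - 1 ≤ x := by
    intro x hx
    rcases List.mem_iff_getElem.1 hx with ⟨t, ht, rfl⟩
    rw [List.getElem_take]
    have ht' : t < k := by omega
    have := (top_val hs hkd hk (j := t+1) (by omega) (by omega)).1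
    simp only [Nat.add_sub_cancel] at this
    rw [← getD_eq_getElem' _ (by omega : t < L.length)]
    omega
  -- counts over take k
  have hceq_take : (L.take k).countP (fun x => x = 2*j-1) = if j = k then eps L k else 0 := by
    by_cases hjk : j = k
    · subst hjk
      unfold eps
      by_cases hcorner : L.getD (j-1) 0 = 2*j - 1
      · rw [if_pos hcorner, if_pos rfl]
        rw [countP_eq_count]
        have hmem : (2*j-1) ∈ L.take j := by
          have hlen' : j - 1 < (L.take j).length := by omega
          have : (L.take j).getD (j-1) 0 = L.getD (j-1) 0 := by
            rw [getD_eq_getElem' _ hlen', getD_eq_getElem' _ (by omega : j - 1 < L.length),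
              List.getElem_take]
          rw [← hcorner, ← this]
          exact getD_mem hlen'
        have hle : (L.take j).count (2*j-1) ≤ L.count (2*j-1) :=
          (List.take_sublist j L).count_le _
        have := hpod (2*j-1) ⟨j-1, by omega⟩
        have := List.count_pos_iff.2 hmem
        omega
      · rw [if_neg hcorner, if_pos rfl]
        rw [List.countP_eq_zero]
        intro x hx
        simp only [decide_eq_true_eq]
        rcases List.mem_iff_getElem.1 hx with ⟨t, ht, rfl⟩
        rw [List.getElem_take]
        intro hxeq
        have ht' : t < j := by omega
        have h3 := getD_anti hs (show t ≤ j - 1 by omega)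
        have h4 := (top_val hs hkd hk (j := j) (by omega) (by omega)).1
        rw [← getD_eq_getElem' _ (by omega : t < L.length)] at hxeq
        omega
    · rw [if_neg hjk]
      rw [List.countP_eq_zero]
      intro x hx
      have := htop x hx
      simp only [decide_eq_true_eq]
      omega
  have hcge_take : (L.take k).countP (fun x => 2*j ≤ x) + (if j = k then eps L k else 0) = k := by
    have := countP_ge_add_eq (l := L.take k) (v := 2*j - 1)
      (fun x hx => by have := htop x hx; omega)
    have hcg : (L.take k).countP (fun x => 2*j - 1 + 1 ≤ x) = (L.take k).countP (fun x => 2*j ≤ x) := by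
      apply countP_congr'
      intro x _
      simp only [decide_eq_true_eq]
      omega
    rw [hcg, hceq_take] at this
    omega
  -- combine with drop part
  have hdecomp := mcolSize_decomp L j (by omega)
  have hsplit_ge : L.countP (fun x => 2*j ≤ x)
      = (L.take k).countP (fun x => 2*j ≤ x) + (L.drop k).countP (fun x => 2*j ≤ x) := by
    conv_lhs => rw [← List.take_append_drop k L]
    rw [List.countP_append]
  have hsplit_eq : L.countP (fun x => x = 2*j-1)
      = (L.take k).countP (fun x => x = 2*j-1) + (L.drop k).countP (fun x => x = 2*j-1) := by
    conv_lhs => rw [← List.take_append_drop k L]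
    rw [List.countP_append]
  have hvv : vv L k j = (L.drop k).countP (fun x => 2*j ≤ x) + ww L k j := by
    unfold vv ww
    have := countP_le_split (L.drop k) (2*j - 1)
    have hcg : (L.drop k).countP (fun x => 2*j - 1 + 1 ≤ x) = (L.drop k).countP (fun x => 2*j ≤ x) := by
      apply countP_congr'
      intro x _
      simp only [decide_eq_true_eq]
      omega
    omega
  have hww : ww L k j = (L.drop k).countP (fun x => x = 2*j-1) := rfl
  omega

/-- The fundamental rank formula. -/
lemma mrank_formula (hs : L.Pairwise (· ≥ ·)) (hpod : ∀ x, Odd x → L.count x ≤ 1)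
    (hkd : mdurfee L = k) (hk : 1 ≤ k) {j : ℕ} (h1 : 1 ≤ j) (h2 : j ≤ k) :
    mrank L (j-1) = 2*((uu L k j : ℤ) - (vv L k j : ℤ)) - ((L.getD (j-1) 0) % 2 : ℕ)
      + (ww L k j : ℤ) + (if j = k then (eps L k : ℤ) else 0) := by
  have hcol := mcolSize_formula hs hpod hkd hk h1 h2
  have htv := (top_val hs hkd hk h1 h2).2.2
  have htv1 := (top_val hs hkd hk h1 h2).1
  unfold mrank
  have hj : j - 1 + 1 = j := by omega
  rw [hj]
  have hmod : (L.getD (j-1) 0) % 2 ≤ 1 := by omega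
  by_cases hjk : j = k
  · rw [if_pos hjk] at hcol
    rw [if_pos hjk]
    push_cast
    omega
  · rw [if_neg hjk] at hcol
    rw [if_neg hjk]
    push_cast
    omega

end Struct


section Placement

variable {L : List ℕ} {k : ℕ}

lemma odd_top_strict (hs : L.Pairwise (· ≥ ·)) (hpod : ∀ x, Odd x → L.count x ≤ 1)
    (hkd : mdurfee L = k) (hk : 1 ≤ k) {j : ℕ} (h1 : 1 ≤ j) (h2 : j < k)
    (hodd : (L.getD (j-1) 0) % 2 = 1) : uu L k (j+1) < uu L k j := by
  have t1 := top_val hs hkd hk (j := j) h1 (by omega)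
  have t2 := top_val hs hkd hk (j := j+1) (by omega) (by omega)
  simp only [Nat.add_sub_cancel] at t2
  have hanti := getD_anti hs (show j - 1 ≤ j by omega)
  -- if the row lengths were equal, the parts would be equal, contradicting distinctness of odd parts
  by_contra hcon
  push_neg at hcon
  have huanti : uu L k (j+1) ≤ uu L k j := uu_anti hs (by omega)
  have huu : uu L k (j+1) = uu L k j := by omega
  unfold uu at huu
  simp only [Nat.add_sub_cancel] at huu
  have hmr1 : k ≤ mrowLen (L.getD (j-1) 0) := by
    unfold mrowLen; omega
  have hmr2 : k ≤ mrowLen (L.getD j 0) := by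
    have := t2.1; unfold mrowLen; omega
  have hmreq : mrowLen (L.getD j 0) = mrowLen (L.getD (j-1) 0) := by omega
  have hveq : L.getD j 0 = L.getD (j-1) 0 := by
    unfold mrowLen at hmreq; omega
  have hcount := two_le_count_of_getD (show j - 1 < j by omega) (by omega : j < L.length) hveq.symm
  have := hpod (L.getD (j-1) 0) (Nat.odd_iff.2 hodd)
  omega

lemma eps_one_facts (hs : L.Pairwise (· ≥ ·)) (hpod : ∀ x, Odd x → L.count x ≤ 1)
    (hkd : mdurfee L = k) (hk : 1 ≤ k) (he : eps L k = 1) :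
    L.getD (k-1) 0 = 2*k - 1 ∧ uu L k k = 0 ∧ vv L k k = 0 ∧ ww L k k = 0 ∧
      (L.getD (k-1) 0) % 2 = 1 := by
  have hcorner : L.getD (k-1) 0 = 2*k - 1 := by
    unfold eps at he
    by_contra h
    rw [if_neg h] at he
    omega
  have huu : uu L k k = 0 := by
    unfold uu
    rw [hcorner]
    unfold mrowLen
    omega
  have hvv : vv L k k = 0 := by
    unfold vv
    rw [List.countP_eq_zero]
    intro x hx
    simp only [decide_eq_true_eq]
    intro hge
    rcases mem_drop_index hx with ⟨i, hki, hil, hval⟩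
    have hle : L.getD i 0 ≤ L.getD (k-1) 0 := getD_anti hs (by omega)
    have hxeq : L.getD i 0 = L.getD (k-1) 0 := by omega
    have hcount := two_le_count_of_getD (show k - 1 < i by omega) hil hxeq.symm
    have := hpod (L.getD (k-1) 0) (by rw [hcorner]; exact ⟨k-1, by omega⟩)
    omega
  have hww : ww L k k = 0 := by
    have h1 : ww L k k ≤ vv L k k := by
      unfold ww vv
      apply List.countP_mono_left
      intro x _
      simp only [decide_eq_true_eq]
      omega
    omega
  exact ⟨hcorner, huu, hvv, hww, by rw [hcorner]; omega⟩

lemma rank_k_zero_of_eps (hs : L.Pairwise (· ≥ ·)) (hpod : ∀ x, Odd x → L.count x ≤ 1)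
    (hkd : mdurfee L = k) (hk : 1 ≤ k) (he : eps L k = 1) : mrank L (k-1) = 0 := by
  obtain ⟨hc, h1, h2, h3, h4⟩ := eps_one_facts hs hpod hkd hk he
  have := mrank_formula hs hpod hkd hk (j := k) hk (le_refl k)
  rw [if_pos rfl, h1, h2, h3, h4, he] at this
  rw [this]
  norm_num

lemma eps_zero_of_rank_ne (hs : L.Pairwise (· ≥ ·)) (hpod : ∀ x, Odd x → L.count x ≤ 1)
    (hkd : mdurfee L = k) (hk : 1 ≤ k) (hr : mrank L (k-1) ≠ 0) : eps L k = 0 := by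
  by_contra h
  have he : eps L k = 1 := by unfold eps at h ⊢; split_ifs at h ⊢ <;> omega
  exact hr (rank_k_zero_of_eps hs hpod hkd hk he)

/-- Condition (a) rules out simultaneous strict drops of `uu` and `vv`. -/
lemma condA_no_both (hs : L.Pairwise (· ≥ ·)) (hpos : ∀ x ∈ L, 0 < x)
    (hpod : ∀ x, Odd x → L.count x ≤ 1) (hkd : mdurfee L = k) (hk : 1 ≤ k)
    (hA : CondA L k) {l : ℕ} (h1 : 1 ≤ l) (h2 : l ≤ k) :
    ¬ (uu L k (l+1) < uu L k l ∧ vv L k (l+1) < vv L k l) := by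
  rintro ⟨hu, hv⟩
  -- the strict drop of vv gives a part of row-length l below the Durfee square
  have hsplit := vv_split_eq (L := L) (k := k) (Or.inr trivial) h1
  have hpos' : 0 < ww L k l + (L.drop k).countP (fun x => x = 2*l) := by omega
  have hx : ∃ x ∈ L.drop k, x = 2*l - 1 ∨ x = 2*l := by
    rcases Nat.pos_of_ne_zero (by omega : ww L k l + (L.drop k).countP (fun x => x = 2*l) ≠ 0) with h
    by_cases hw : 0 < ww L k l
    · unfold ww at hw
      rcases List.countP_pos_iff.1 hw with ⟨x, hxmem, hxp⟩
      exact ⟨x, hxmem, Or.inl (by simpa using hxp)⟩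
    · have : 0 < (L.drop k).countP (fun x => x = 2*l) := by omega
      rcases List.countP_pos_iff.1 this with ⟨x, hxmem, hxp⟩
      exact ⟨x, hxmem, Or.inr (by simpa using hxp)⟩
  rcases hx with ⟨x, hxmem, hxval⟩
  rcases mem_drop_index hxmem with ⟨i, hki, hil, hival⟩
  have hmrow : mrowLen (L.getD i 0) = l := by
    rw [hival]; unfold mrowLen; omega
  -- the strict drop of uu gives a column of length l to the right of the square
  have hu1 : 1 ≤ uu L k l := by omega
  set c := k + uu L k l with hc
  have htv := top_val hs hkd hk (j := l) h1 h2
  have hcol : mcolLen L c = l := by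
    unfold mcolLen
    apply countP_eq_of_boundary hs (by omega)
    · omega
    · intro t ht
      have := getD_anti hs (show t ≤ l - 1 by omega)
      have hval : L.getD (l-1) 0 = 2*(k + uu L k l) - (L.getD (l-1) 0) % 2 := htv.2.2
      have : 2*c - 1 ≤ L.getD (l-1) 0 := by omega
      omega
    · intro hllen
      by_cases hlk : l < k
      · have t2 := top_val hs hkd hk (j := l+1) (by omega) (by omega)
        simp only [Nat.add_sub_cancel] at t2
        have : L.getD l 0 = 2*(k + uu L k (l+1)) - (L.getD l 0) % 2 := t2.2.2
        omega
      · have hlk' : l = k := by omega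
        have := bot_le_2k hs hkd l (by omega)
        omega
  exact hA i hki hil c (by omega) (by rw [hcol, hmrow])

/-- Failure of condition (a) yields explicit data. -/
lemma condA_fail_data (hs : L.Pairwise (· ≥ ·)) (hpos : ∀ x ∈ L, 0 < x)
    (hkd : mdurfee L = k) (hk : 1 ≤ k) (hnA : ¬ CondA L k) :
    ∃ l i c, 1 ≤ l ∧ l ≤ k ∧ k ≤ i ∧ i < L.length ∧ k < c ∧
      (L.getD i 0 = 2*l - 1 ∨ L.getD i 0 = 2*l) ∧
      2*c - 1 ≤ L.getD (l-1) 0 ∧ (l < L.length → L.getD l 0 ≤ 2*c - 2) := by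
  unfold CondA at hnA
  push_neg at hnA
  rcases hnA with ⟨i, hki, hil, c, hck, hceq⟩
  set l := mrowLen (L.getD i 0) with hl
  have hpos_i : 0 < L.getD i 0 := by
    have := hpos _ (getD_mem hil); omega
  have hl1 : 1 ≤ l := by unfold l; unfold mrowLen; omega
  have hl2 : l ≤ k := by
    have := bot_le_2k hs hkd i hki
    unfold l; unfold mrowLen; omega
  have hrow : L.getD i 0 = 2*l - 1 ∨ L.getD i 0 = 2*l := by
    unfold l; unfold mrowLen; omega
  have HB := sorted_countP_iff hs (2*c - 1) (by omega)
  unfold mcolLen at hceq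
  have hbig : 2*c - 1 ≤ L.getD (l-1) 0 := by
    have := (HB (l-1)).1 (by omega)
    exact this.2
  have hnext : l < L.length → L.getD l 0 ≤ 2*c - 2 := by
    intro hllen
    have := (HB l).2
    by_contra hcon
    have h3 := this ⟨hllen, by omega⟩
    omega
  exact ⟨l, i, c, hl1, hl2, hki, hil, hck, hrow, hbig, hnext⟩

end Placement


section Moves

variable {L : List ℕ} {k : ℕ}

lemma ent_two {c x : ℕ} (h : 2*c ≤ x) : ent c x = 2 := by unfold ent; rw [if_pos h]

lemma ent_one {c x : ℕ} (hc : 1 ≤ c) (h : x = 2*c - 1) : ent c x = 1 := by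
  unfold ent; rw [if_neg (by omega), if_pos (by omega)]

lemma ent_zero {c x : ℕ} (hc : 1 ≤ c) (h : x ≤ 2*c - 2) : ent c x = 0 := by
  unfold ent; rw [if_neg (by omega), if_neg (by omega)]

lemma mcolSize_append_singleton (l : List ℕ) (a c : ℕ) :
    mcolSize (l ++ [a]) c = mcolSize l c + ent c a := by
  rw [mcolSize_eq_map, mcolSize_eq_map, List.map_append, List.sum_append]
  simp [ent]

lemma not_mem_of_getD {l : List ℕ} {x : ℕ} (h : ∀ t, t < l.length → l.getD t 0 ≠ x) :
    x ∉ l := by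
  intro hx
  rcases List.mem_iff_getElem.1 hx with ⟨t, ht, rfl⟩
  exact h t ht (getD_eq_getElem' _ ht)

lemma getD_mem_drop {l : List ℕ} {k t : ℕ} (h1 : k ≤ t) (h2 : t < l.length) :
    l.getD t 0 ∈ l.drop k := by
  have hlen : t - k < (l.drop k).length := by rw [List.length_drop]; omega
  have := getD_drop l k (t - k)
  rw [(by omega : k + (t - k) = t)] at this
  rw [← this]
  exact getD_mem hlen

/-- The core reduction move: decrement the part at position `l-1` (a top row) and the
part at position `j` (a bottom row of 2-modular length `l`), each by one. -/
lemma moveA_core (hs : L.Pairwise (· ≥ ·)) (hpos : ∀ x ∈ L, 0 < x)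
    (hpod : ∀ x, Odd x → L.count x ≤ 1) (hkd : mdurfee L = k) (hk : 1 ≤ k)
    {l j c b : ℕ} (hl1 : 1 ≤ l) (hl2 : l ≤ k)
    (hjk : k ≤ j) (hjl : j < L.length) (hck : k < c)
    (hb : L.getD j 0 = b) (hbl : b = 2*l - 1 ∨ b = 2*l) (hb2 : 2 ≤ b)
    (hnew : b = 2*l → (2*l - 1) ∉ L)
    (hafter : ∀ t, j < t → t < L.length → L.getD t 0 ≤ 2*l - 2)
    (htopbig : 2*c - 1 ≤ L.getD (l-1) 0)
    (hnext : L.getD l 0 ≤ 2*c - 2) :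
    ∃ L' : List ℕ, L'.Pairwise (· ≥ ·) ∧ (∀ x ∈ L', 0 < x) ∧
      (∀ x, Odd x → L'.count x ≤ 1) ∧ mranks L' = mranks L ∧ L'.sum + 2 = L.sum := by
  set v := L.getD (l-1) 0 with hv
  have hllen : l - 1 < L.length := by omega
  have hlj : l - 1 < j := by omega
  have hvbig : 2*k + 1 ≤ v := by omega
  have hble : b ≤ 2*k := by omega
  set M1 := L.set (l-1) (v-1) with hM1
  have hM1len : M1.length = L.length := List.length_set
  have gM1 : ∀ t, M1.getD t 0 = if l - 1 = t then v - 1 else L.getD t 0 :=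
    fun t => getD_set t hllen
  have gM1j : M1.getD j 0 = b := by rw [gM1, if_neg (by omega), hb]
  have hsM1 : M1.Pairwise (· ≥ ·) := by
    apply sorted_set hs hllen
    · intro t ht
      have := getD_anti hs (show t ≤ l - 1 by omega)
      omega
    · intro t ht htl
      have := getD_anti hs (show l ≤ t by omega)
      omega
  set L' := M1.set j (b-1) with hL'
  have hjM1 : j < M1.length := by omega
  have hL'len : L'.length = L.length := by rw [hL', List.length_set, hM1len]
  have gL' : ∀ t, L'.getD t 0 = if j = t then b - 1 else M1.getD t 0 :=
    fun t => getD_set t hjM1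
  have hsL' : L'.Pairwise (· ≥ ·) := by
    apply sorted_set hsM1 hjM1
    · intro t ht
      rw [gM1]
      split_ifs with h1
      · omega
      · have := getD_anti hs (show t ≤ j by omega)
        omega
    · intro t ht htl
      rw [gM1, if_neg (by omega)]
      have := hafter t ht (by omega)
      omega
  have hposL' : ∀ x ∈ L', 0 < x := by
    apply pos_of_getD
    intro t htl
    rw [gL', gM1]
    split_ifs with h1 h2
    · omega
    · omega
    · have := hpos _ (getD_mem (show t < L.length by omega))
      omega
  have hdurf : mdurfee L' = k := by
    apply mdurfee_eq_of hsL' (by omega)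
    · intro t ht
      rw [gL', if_neg (by omega), gM1]
      have := (mdurfee_lt_iff hs t).1 (by omega)
      split_ifs with h1
      · omega
      · omega
    · intro hkl
      rw [gL', gM1]
      have := bot_le_2k hs hkd k (le_refl k)
      split_ifs with h1 h2 <;> omega
  -- rank preservation
  have hrank : ∀ t, t < k → mrank L' t = mrank L t := by
    intro t ht
    have hc1 : 1 ≤ t + 1 := by omega
    have e1 := mcolSize_set (L := L) (j := l-1) (y := v-1) (t+1) hllen
    have e2 := mcolSize_set (L := M1) (j := j) (y := b-1) (t+1) hjM1
    rw [gM1j] at e2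
    rw [← hv, ← hM1] at e1
    rw [← hL'] at e2
    have hEv : ent (t+1) v = 2 := ent_two (by omega)
    have hEv' : ent (t+1) (v-1) = 2 := ent_two (by omega)
    have hg : L'.getD t 0 = if l - 1 = t then v - 1 else L.getD t 0 := by
      rw [gL', if_neg (by omega), gM1]
    unfold mrank
    rcases Nat.lt_trichotomy (t+1) l with hcl | hcl | hcl
    · have hEb : ent (t+1) b = 2 := ent_two (by omega)
      have hEb' : ent (t+1) (b-1) = 2 := ent_two (by omega)
      rw [hg, if_neg (by omega)]
      rw [hEb, hEb'] at e2
      rw [hEv, hEv'] at e1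
      have : mcolSize L' (t+1) = mcolSize L (t+1) := by omega
      rw [this]
    · -- t + 1 = l
      have hgt : L'.getD t 0 = v - 1 := by rw [hg, if_pos (by omega)]
      rcases hbl with hb1 | hb1
      · have hEb : ent (t+1) b = 1 := ent_one hc1 (by omega)
        have hEb' : ent (t+1) (b-1) = 0 := ent_zero hc1 (by omega)
        rw [hEb, hEb'] at e2
        rw [hEv, hEv'] at e1
        rw [hgt]
        have hcs : mcolSize L' (t+1) + 1 = mcolSize L (t+1) := by omega
        have hgl : L.getD t 0 = v := by rw [hv]; congr 1; omega
        rw [hgl]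
        push_cast
        omega
      · have hEb : ent (t+1) b = 2 := ent_two (by omega)
        have hEb' : ent (t+1) (b-1) = 1 := ent_one hc1 (by omega)
        rw [hEb, hEb'] at e2
        rw [hEv, hEv'] at e1
        rw [hgt]
        have hcs : mcolSize L' (t+1) + 1 = mcolSize L (t+1) := by omega
        have hgl : L.getD t 0 = v := by rw [hv]; congr 1; omega
        rw [hgl]
        push_cast
        omega
    · have hEb : ent (t+1) b = 0 := ent_zero hc1 (by omega)
      have hEb' : ent (t+1) (b-1) = 0 := ent_zero hc1 (by omega)
      rw [hg, if_neg (by omega)]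
      rw [hEb, hEb'] at e2
      rw [hEv, hEv'] at e1
      have : mcolSize L' (t+1) = mcolSize L (t+1) := by omega
      rw [this]
  -- sum
  have hsum1 := sum_set'' L (l-1) (v-1) hllen
  have hsum2 := sum_set'' M1 j (b-1) hjM1
  rw [gM1j] at hsum2
  rw [← hv, ← hM1] at hsum1
  rw [← hL'] at hsum2
  have hsum : L'.sum + 2 = L.sum := by omega
  -- Pod
  have hpodL' : ∀ x, Odd x → L'.count x ≤ 1 := by
    intro x hodd
    have hpx := hpod x hodd
    have hxodd : x % 2 = 1 := Nat.odd_iff.1 hodd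
    have E1 := count_set (l := L) (j := l-1) (y := v-1) hllen x
    have E2 := count_set (l := M1) (j := j) (y := b-1) hjM1 x
    rw [gM1j] at E2
    rw [← hv, ← hM1] at E1
    rw [← hL'] at E2
    by_cases hb1x : b - 1 = x
    · -- the new odd bottom part; b must be even
      have hbeven : b = 2*l := by rcases hbl with h | h <;> omega
      have hxval : x = 2*l - 1 := by omega
      have hx0 : L.count x = 0 := by
        apply List.count_eq_zero_of_not_mem
        rw [hxval]
        exact hnew hbeven
      rw [if_neg (show ¬ v = x by omega), if_neg (show ¬ v - 1 = x by omega)] at E1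
      rw [if_pos hb1x, if_neg (show ¬ b = x by omega)] at E2
      omega
    · by_cases hv1x : v - 1 = x
      · -- the new odd top part; v must be even
        have hveven : v % 2 = 0 := by omega
        have hv2c : 2*c ≤ v := by omega
        have hx0 : L.count x = 0 := by
          apply List.count_eq_zero_of_not_mem
          apply not_mem_of_getD
          intro t htl
          rcases Nat.lt_or_ge t l with h1 | h1
          · have := getD_anti hs (show t ≤ l - 1 by omega)
            omega
          · have := getD_anti hs (show l ≤ t by omega)
            omega
        rw [if_pos hv1x, if_neg (show ¬ v = x by omega)] at E1
        rw [if_neg hb1x] at E2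
        by_cases hbx : b = x
        · rw [if_pos hbx] at E2
          omega
        · rw [if_neg hbx] at E2
          omega
      · rw [if_neg hv1x] at E1
        rw [if_neg hb1x] at E2
        by_cases hvx : v = x
        · rw [if_pos hvx] at E1
          by_cases hbx : b = x
          · rw [if_pos hbx] at E2
            omega
          · rw [if_neg hbx] at E2
            omega
        · rw [if_neg hvx] at E1
          by_cases hbx : b = x
          · rw [if_pos hbx] at E2
            omega
          · rw [if_neg hbx] at E2
            omega
  exact ⟨L', hsL', hposL', hpodL', mranks_eq_of (by rw [hdurf, hkd]) (by rw [hkd]; exact hrank),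
    hsum⟩

end Moves


section Moves2

variable {L : List ℕ} {k : ℕ}

lemma getD_append_left' {l l' : List ℕ} {t : ℕ} (h : t < l.length) :
    (l ++ l').getD t 0 = l.getD t 0 := by
  rw [getD_eq_getElem' _ (by rw [List.length_append]; omega), getD_eq_getElem' _ h,
    List.getElem_append_left h]

/-- The deletion move: decrement the top part by one and delete the (unique) part `1`. -/
lemma moveA_del (hs : L.Pairwise (· ≥ ·)) (hpos : ∀ x ∈ L, 0 < x)
    (hpod : ∀ x, Odd x → L.count x ≤ 1) (hkd : mdurfee L = k) (hk : 1 ≤ k)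
    {c : ℕ} (hck : k < c)
    (hone : L.getD (L.length - 1) 0 = 1) (hlen2 : 2 ≤ L.length) (hklen : k ≤ L.length - 1)
    (htopbig : 2*c - 1 ≤ L.getD 0 0)
    (hnext : L.getD 1 0 ≤ 2*c - 2) :
    ∃ L' : List ℕ, L'.Pairwise (· ≥ ·) ∧ (∀ x ∈ L', 0 < x) ∧
      (∀ x, Odd x → L'.count x ≤ 1) ∧ mranks L' = mranks L ∧ L'.sum + 2 = L.sum := by
  set v := L.getD 0 0 with hv
  have h0len : 0 < L.length := by omega
  have hvbig : 2*k + 1 ≤ v := by omega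
  set M1 := L.set 0 (v-1) with hM1
  have hM1len : M1.length = L.length := List.length_set
  have gM1 : ∀ t, M1.getD t 0 = if 0 = t then v - 1 else L.getD t 0 :=
    fun t => getD_set t h0len
  have hsM1 : M1.Pairwise (· ≥ ·) := by
    apply sorted_set hs h0len
    · intro t ht; omega
    · intro t ht htl
      have := getD_anti hs (show 1 ≤ t by omega)
      omega
  set L' := M1.dropLast with hL'
  have hM1ne : M1 ≠ [] := by
    intro h
    have : M1.length = 0 := by rw [h]; rfl
    omega
  have hlast : M1.getLast hM1ne = 1 := by
    rw [List.getLast_eq_getElem, ← getD_eq_getElem' _ (by omega), hM1len, gM1,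
      if_neg (by omega)]
    exact hone
  have hdecomp : L' ++ [1] = M1 := by
    rw [hL', ← hlast]
    exact List.dropLast_append_getLast hM1ne
  have hL'len : L'.length = L.length - 1 := by
    rw [hL', List.length_dropLast, hM1len]
  have gL' : ∀ t, t < L.length - 1 → L'.getD t 0 = M1.getD t 0 := by
    intro t ht
    rw [← hdecomp, getD_append_left' (by omega)]
  have hsL' : L'.Pairwise (· ≥ ·) := hsM1.sublist (List.dropLast_sublist M1)
  have hposL' : ∀ x ∈ L', 0 < x := by
    apply pos_of_getD
    intro t htl
    rw [hL'len] at htl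
    rw [gL' t htl, gM1]
    split_ifs with h1
    · omega
    · have := hpos _ (getD_mem (show t < L.length by omega))
      omega
  have hdurf : mdurfee L' = k := by
    apply mdurfee_eq_of hsL' (by omega)
    · intro t ht
      rw [gL' t (by omega), gM1]
      have := (mdurfee_lt_iff hs t).1 (by omega)
      split_ifs with h1
      · omega
      · omega
    · intro hkl
      rw [hL'len] at hkl
      rw [gL' k (by omega), gM1, if_neg (by omega)]
      exact bot_le_2k hs hkd k (le_refl k)
  have hcolL' : ∀ c', mcolSize L' c' + ent c' 1 = mcolSize M1 c' := by
    intro c'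
    rw [← hdecomp, mcolSize_append_singleton]
  have hrank : ∀ t, t < k → mrank L' t = mrank L t := by
    intro t ht
    have e1 := mcolSize_set (L := L) (j := 0) (y := v-1) (t+1) h0len
    rw [← hv, ← hM1] at e1
    have hEv : ent (t+1) v = 2 := ent_two (by omega)
    have hEv' : ent (t+1) (v-1) = 2 := ent_two (by omega)
    rw [hEv, hEv'] at e1
    have e2 := hcolL' (t+1)
    unfold mrank
    rw [gL' t (by omega), gM1]
    by_cases ht0 : 0 = t
    · have hE1 : ent (t+1) 1 = 1 := ent_one (by omega) (by omega)
      rw [if_pos ht0]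
      rw [hE1] at e2
      have hgl : L.getD t 0 = v := by rw [← ht0]
      rw [hgl]
      push_cast
      omega
    · have hE1 : ent (t+1) 1 = 0 := ent_zero (by omega) (by omega)
      rw [if_neg ht0]
      rw [hE1] at e2
      have : mcolSize L' (t+1) = mcolSize L (t+1) := by omega
      rw [this]
  have hsum1 := sum_set'' L 0 (v-1) h0len
  rw [← hv, ← hM1] at hsum1
  have hsum2 : L'.sum + 1 = M1.sum := by
    rw [← hdecomp, List.sum_append]
    simp
  have hsum : L'.sum + 2 = L.sum := by omega
  have hpodL' : ∀ x, Odd x → L'.count x ≤ 1 := by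
    intro x hodd
    have hpx := hpod x hodd
    have hxodd : x % 2 = 1 := Nat.odd_iff.1 hodd
    have E1 := count_set (l := L) (j := 0) (y := v-1) h0len x
    rw [← hv, ← hM1] at E1
    have E2 : L'.count x + List.count x [1] = M1.count x := by
      rw [← hdecomp, List.count_append]
    by_cases hv1x : v - 1 = x
    · have hveven : v % 2 = 0 := by omega
      have hv2c : 2*c ≤ v := by omega
      have hx0 : L.count x = 0 := by
        apply List.count_eq_zero_of_not_mem
        apply not_mem_of_getD
        intro t htl
        rcases Nat.eq_zero_or_pos t with rfl | h1
        · omega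
        · have := getD_anti hs (show 1 ≤ t by omega)
          omega
      rw [if_pos hv1x, if_neg (show ¬ v = x by omega)] at E1
      omega
    · rw [if_neg hv1x] at E1
      by_cases hvx : v = x
      · rw [if_pos hvx] at E1
        omega
      · rw [if_neg hvx] at E1
        omega
  exact ⟨L', hsL', hposL', hpodL', mranks_eq_of (by rw [hdurf, hkd]) (by rw [hkd]; exact hrank),
    hsum⟩

/-- The corner move. -/
lemma moveB (hs : L.Pairwise (· ≥ ·)) (hpos : ∀ x ∈ L, 0 < x)
    (hpod : ∀ x, Odd x → L.count x ≤ 1) (hkd : mdurfee L = k) (hk : 1 ≤ k)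
    (hr : mrank L (k-1) = 0) (hcorner : L.getD (k-1) 0 = 2*k) :
    ∃ L' : List ℕ, L'.Pairwise (· ≥ ·) ∧ (∀ x ∈ L', 0 < x) ∧
      (∀ x, Odd x → L'.count x ≤ 1) ∧ mranks L' = mranks L ∧ L'.sum + 1 = L.sum := by
  have hklen : k ≤ L.length := hkd ▸ mdurfee_le_length L
  have hk1len : k - 1 < L.length := by
    have := (top_val hs hkd hk (j := k) hk (le_refl k)).2.1
    omega
  have heps : eps L k = 0 := by
    unfold eps
    rw [if_neg (by omega)]
  have hmod : (L.getD (k-1) 0) % 2 = 0 := by omega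
  have hform := mrank_formula hs hpod hkd hk (j := k) hk (le_refl k)
  rw [if_pos rfl, hr, heps, hmod] at hform
  have hwv : ww L k k ≤ vv L k k := by
    unfold ww vv
    apply List.countP_mono_left
    intro x _
    simp only [decide_eq_true_eq]
    omega
  have hvv0 : vv L k k = 0 := by
    have huu0 : uu L k k = 0 := by
      unfold uu
      rw [hcorner]
      unfold mrowLen
      omega
    rw [huu0] at hform
    push_cast at hform
    omega
  have hbot : ∀ t, k ≤ t → t < L.length → L.getD t 0 ≤ 2*k - 2 := by
    intro t h1 h2
    have hmem := getD_mem_drop h1 h2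
    have : ¬ (2*k - 1 ≤ L.getD t 0) := by
      intro hge
      have := List.countP_eq_zero.1 hvv0 _ hmem
      simp only [decide_eq_true_eq] at this
      exact this hge
    omega
  set L' := L.set (k-1) (2*k-1) with hL'
  have hL'len : L'.length = L.length := by rw [hL']; exact List.length_set
  have gL' : ∀ t, L'.getD t 0 = if k - 1 = t then 2*k - 1 else L.getD t 0 :=
    fun t => getD_set t hk1len
  have hsL' : L'.Pairwise (· ≥ ·) := by
    apply sorted_set hs hk1len
    · intro t ht
      have := getD_anti hs (show t ≤ k - 1 by omega)
      omega
    · intro t ht htl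
      have := hbot t (by omega) htl
      omega
  have hposL' : ∀ x ∈ L', 0 < x := by
    apply pos_of_getD
    intro t htl
    rw [gL']
    split_ifs with h1
    · omega
    · have := hpos _ (getD_mem (show t < L.length by omega))
      omega
  have hdurf : mdurfee L' = k := by
    apply mdurfee_eq_of hsL' (by rw [hL', List.length_set]; omega)
    · intro t ht
      rw [gL']
      have := (mdurfee_lt_iff hs t).1 (by omega)
      split_ifs with h1
      · omega
      · omega
    · intro hkl
      rw [gL', if_neg (by omega)]
      exact bot_le_2k hs hkd k (le_refl k)
  have hrank : ∀ t, t < k → mrank L' t = mrank L t := by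
    intro t ht
    have e1 := mcolSize_set (L := L) (j := k-1) (y := 2*k-1) (t+1) hk1len
    rw [← hL', hcorner] at e1
    have hEv : ent (t+1) (2*k) = 2 := ent_two (by omega)
    rw [hEv] at e1
    unfold mrank
    rw [gL']
    by_cases htk : k - 1 = t
    · have hE1 : ent (t+1) (2*k-1) = 1 := ent_one (by omega) (by omega)
      rw [hE1] at e1
      rw [if_pos htk]
      have hgl : L.getD t 0 = 2*k := by rw [← htk]; exact hcorner
      rw [hgl]
      push_cast
      omega
    · have hE1 : ent (t+1) (2*k-1) = 2 := ent_two (by omega)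
      rw [hE1] at e1
      rw [if_neg htk]
      have : mcolSize L' (t+1) = mcolSize L (t+1) := by omega
      rw [this]
  have hsum1 := sum_set'' L (k-1) (2*k-1) hk1len
  rw [← hL', hcorner] at hsum1
  have hsum : L'.sum + 1 = L.sum := by omega
  have hpodL' : ∀ x, Odd x → L'.count x ≤ 1 := by
    intro x hodd
    have hpx := hpod x hodd
    have hxodd : x % 2 = 1 := Nat.odd_iff.1 hodd
    have E1 := count_set (l := L) (j := k-1) (y := 2*k-1) hk1len x
    rw [← hL', hcorner] at E1
    by_cases h1x : 2*k - 1 = x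
    · have hx0 : L.count x = 0 := by
        apply List.count_eq_zero_of_not_mem
        apply not_mem_of_getD
        intro t htl
        rcases Nat.lt_or_ge t k with h1 | h1
        · have := getD_anti hs (show t ≤ k - 1 by omega)
          omega
        · have := hbot t h1 htl
          omega
      rw [if_pos h1x, if_neg (show ¬ 2*k = x by omega)] at E1
      omega
    · rw [if_neg h1x] at E1
      by_cases h2x : 2*k = x
      · omega
      · rw [if_neg h2x] at E1
        omega
  exact ⟨L', hsL', hposL', hpodL', mranks_eq_of (by rw [hdurf, hkd]) (by rw [hkd]; exact hrank),
    hsum⟩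

end Moves2


section MoveExists

variable {L : List ℕ} {k : ℕ}

lemma move_exists (hs : L.Pairwise (· ≥ ·)) (hpos : ∀ x ∈ L, 0 < x)
    (hpod : ∀ x, Odd x → L.count x ≤ 1) (hkd : mdurfee L = k) (hk : 1 ≤ k)
    (hfail : ¬ CondA L k ∨ ¬ CondB L k) :
    ∃ L' : List ℕ, L'.Pairwise (· ≥ ·) ∧ (∀ x ∈ L', 0 < x) ∧
      (∀ x, Odd x → L'.count x ≤ 1) ∧ mranks L' = mranks L ∧ L'.sum < L.sum := by
  have hdata : (∃ l i c, 1 ≤ l ∧ l ≤ k ∧ k ≤ i ∧ i < L.length ∧ k < c ∧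
      (L.getD i 0 = 2*l - 1 ∨ L.getD i 0 = 2*l) ∧
      2*c - 1 ≤ L.getD (l-1) 0 ∧ (l < L.length → L.getD l 0 ≤ 2*c - 2)) ∨
      (mrank L (k-1) = 0 ∧ L.getD (k-1) 0 = 2*k) := by
    rcases hfail with hA | hB
    · exact Or.inl (condA_fail_data hs hpos hkd hk hA)
    · unfold CondB at hB
      push_neg at hB
      obtain ⟨hr, hcne⟩ := hB
      have htv := top_val hs hkd hk (j := k) hk (le_refl k)
      by_cases hc2k : L.getD (k-1) 0 = 2*k
      · exact Or.inr ⟨hr, hc2k⟩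
      · left
        have hbig : 2*k + 1 ≤ L.getD (k-1) 0 := by omega
        have heps : eps L k = 0 := by unfold eps; rw [if_neg hcne]
        have hform := mrank_formula hs hpod hkd hk (j := k) hk (le_refl k)
        rw [if_pos rfl, hr, heps] at hform
        have huu : 1 ≤ uu L k k := by
          unfold uu mrowLen; omega
        have hwv : ww L k k ≤ vv L k k := by
          unfold ww vv
          apply List.countP_mono_left
          intro x _
          simp only [decide_eq_true_eq]
          omega
        have hmod : L.getD (k-1) 0 % 2 ≤ 1 := by omega
        have hvv : 1 ≤ vv L k k := by push_cast at hform; omega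
        have hvv' : 0 < (L.drop k).countP (fun x => 2*k - 1 ≤ x) := hvv
        rcases List.countP_pos_iff.1 hvv' with ⟨x, hxmem, hxp⟩
        simp only [decide_eq_true_eq] at hxp
        rcases mem_drop_index hxmem with ⟨i, hki, hil, hival⟩
        have hx2k := bot_mem_le_2k hs hkd x hxmem
        refine ⟨k, i, k+1, hk, le_refl k, hki, hil, by omega, ?_, by omega, ?_⟩
        · rw [hival]; omega
        · intro hkl
          have := bot_le_2k hs hkd k (le_refl k)
          omega
  rcases hdata with ⟨l, i, c, hl1, hl2, hki, hil, hck, hrow, hbig, hnext⟩ | ⟨hr, hc2k⟩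
  · have hllen : l < L.length := by omega
    have hnext' := hnext hllen
    by_cases hmem : (2*l - 1) ∈ L
    · rcases List.mem_iff_getElem.1 hmem with ⟨j0, hj0, hj0val⟩
      have hj0val' : L.getD j0 0 = 2*l - 1 := by rw [getD_eq_getElem' _ hj0, hj0val]
      have hj0k : k ≤ j0 := by
        by_contra hcon
        push_neg at hcon
        have htv := top_val hs hkd hk (j := j0+1) (by omega) (by omega)
        simp only [Nat.add_sub_cancel] at htv
        have h1 : 2*k - 1 ≤ 2*l - 1 := by omega
        have hlk : l = k := by omega
        have h2 := getD_anti hs (show j0 ≤ l - 1 by omega)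
        omega
      by_cases hl1' : 2 ≤ l
      · have hafter : ∀ t, j0 < t → t < L.length → L.getD t 0 ≤ 2*l - 2 := by
          intro t ht htl
          have hle := getD_anti hs (le_of_lt ht)
          by_contra hcon
          have heqv : L.getD t 0 = L.getD j0 0 := by omega
          have hcnt := two_le_count_of_getD ht htl heqv.symm
          have := hpod (2*l-1) ⟨l-1, by omega⟩
          rw [hj0val'] at hcnt
          omega
        obtain ⟨L', a1, a2, a3, a4, a5⟩ := moveA_core hs hpos hpod hkd hk hl1 hl2 hj0k
          hj0 hck hj0val' (Or.inl rfl) (by omega) (fun h => absurd h (by omega))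
          hafter hbig hnext'
        exact ⟨L', a1, a2, a3, a4, by omega⟩
      · have hl1'' : l = 1 := by omega
        subst hl1''
        have hlen2 : 2 ≤ L.length := by omega
        have hone : L.getD (L.length - 1) 0 = 1 := by
          have h1 := getD_anti hs (show j0 ≤ L.length - 1 by omega)
          have h2 := hpos _ (getD_mem (show L.length - 1 < L.length by omega))
          omega
        obtain ⟨L', a1, a2, a3, a4, a5⟩ := moveA_del hs hpos hpod hkd hk hck hone hlen2
          (by omega) (by simpa using hbig) (by simpa using hnext')
        exact ⟨L', a1, a2, a3, a4, by omega⟩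
    · have hbval : L.getD i 0 = 2*l := by
        rcases hrow with h | h
        · exfalso; apply hmem; rw [← h]; exact getD_mem hil
        · exact h
      have HB := sorted_countP_iff hs (2*l) (by omega)
      have hicnt : i < L.countP (fun x => 2*l ≤ x) := (HB i).2 ⟨hil, by omega⟩
      set j := L.countP (fun x => 2*l ≤ x) - 1 with hj
      have hjcnt : j < L.countP (fun x => 2*l ≤ x) := by omega
      have hjfacts := (HB j).1 hjcnt
      have hjval : L.getD j 0 = 2*l := by
        have := getD_anti hs (show i ≤ j by omega)
        omega
      have hafter : ∀ t, j < t → t < L.length → L.getD t 0 ≤ 2*l - 2 := by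
        intro t ht htl
        have h3 : ¬ (2*l ≤ L.getD t 0) := by
          intro hge
          have := (HB t).2 ⟨htl, hge⟩
          omega
        have h4 : L.getD t 0 ≠ 2*l - 1 := by
          intro heq
          apply hmem
          rw [← heq]
          exact getD_mem htl
        omega
      obtain ⟨L', a1, a2, a3, a4, a5⟩ := moveA_core hs hpos hpod hkd hk hl1 hl2
        (by omega) (by omega) hck hjval (Or.inr rfl) (by omega)
        (fun _ => hmem) hafter hbig hnext'
      exact ⟨L', a1, a2, a3, a4, by omega⟩
  · obtain ⟨L', a1, a2, a3, a4, a5⟩ := moveB hs hpos hpod hkd hk hr hc2k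
    exact ⟨L', a1, a2, a3, a4, by omega⟩

end MoveExists


section Unique

variable {L M : List ℕ} {k : ℕ}

/-- The core determination argument. -/
lemma det_core {AL BL wL pL AM BM wM pM A' B' : ℕ} {r : ℤ}
    (fL : r = 2*((AL:ℤ) - (BL:ℤ)) - (pL:ℤ) + (wL:ℤ))
    (fM : r = 2*((AM:ℤ) - (BM:ℤ)) - (pM:ℤ) + (wM:ℤ))
    (uaL : A' ≤ AL) (vaL : B' ≤ BL) (uaM : A' ≤ AM) (vaM : B' ≤ BM)
    (nbL : ¬ (A' < AL ∧ B' < BL)) (nbM : ¬ (A' < AM ∧ B' < BM))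
    (poL : pL = 1 → A' < AL) (poM : pM = 1 → A' < AM)
    (pwL : 1 ≤ wL → B' < BL) (pwM : 1 ≤ wM → B' < BM)
    (w1L : wL ≤ 1) (w1M : wM ≤ 1) (p1L : pL ≤ 1) (p1M : pM ≤ 1) :
    AL = AM ∧ BL = BM ∧ wL = wM ∧ pL = pM := by omega

set_option maxHeartbeats 1000000 in
/-- Two partitions in `P_{o,d}` with the same 2-modular Durfee size, the same rank
vector, both satisfying conditions (a) and (b), are equal. -/
lemma unique_basis (hsL : L.Pairwise (· ≥ ·)) (hposL : ∀ x ∈ L, 0 < x)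
    (hpodL : ∀ x, Odd x → L.count x ≤ 1) (hkdL : mdurfee L = k)
    (hsM : M.Pairwise (· ≥ ·)) (hposM : ∀ x ∈ M, 0 < x)
    (hpodM : ∀ x, Odd x → M.count x ≤ 1) (hkdM : mdurfee M = k) (hk : 1 ≤ k)
    (hAL : CondA L k) (hBL : CondB L k) (hAM : CondA M k) (hBM : CondB M k)
    (hrk : ∀ j < k, mrank L j = mrank M j) : L = M := by
  have hklenL : k ≤ L.length := hkdL ▸ mdurfee_le_length L
  have hklenM : k ≤ M.length := hkdM ▸ mdurfee_le_length M
  -- one determination step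
  have step : ∀ j, 1 ≤ j → j ≤ k → uu L k (j+1) = uu M k (j+1) →
      vv L k (j+1) = vv M k (j+1) →
      uu L k j = uu M k j ∧ vv L k j = vv M k j ∧ ww L k j = ww M k j ∧
        L.getD (j-1) 0 = M.getD (j-1) 0 := by
    intro j h1 h2 ihu ihv
    have hr := hrk (j-1) (by omega)
    have fL := mrank_formula hsL hpodL hkdL hk h1 h2
    have fM := mrank_formula hsM hpodM hkdM hk h1 h2
    have uaL := uu_anti hsL (show j ≤ j + 1 by omega) (k := k)
    have uaM := uu_anti hsM (show j ≤ j + 1 by omega) (k := k)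
    have vaL := vv_anti h1 (show j ≤ j + 1 by omega) (L := L) (k := k)
    have vaM := vv_anti h1 (show j ≤ j + 1 by omega) (L := M) (k := k)
    have nbL := condA_no_both hsL hposL hpodL hkdL hk hAL h1 h2
    have nbM := condA_no_both hsM hposM hpodM hkdM hk hAM h1 h2
    have pwL : 1 ≤ ww L k j → vv L k (j+1) < vv L k j := by
      have := ww_le_vv_sub (L := L) (k := k) h1; omega
    have pwM : 1 ≤ ww M k j → vv M k (j+1) < vv M k j := by
      have := ww_le_vv_sub (L := M) (k := k) h1; omega
    have w1L := ww_le_one (L := L) (k := k) hpodL h1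
    have w1M := ww_le_one (L := M) (k := k) hpodM h1
    have tvL := (top_val hsL hkdL hk h1 h2).2.2
    have tvM := (top_val hsM hkdM hk h1 h2).2.2
    have tv1L := (top_val hsL hkdL hk h1 h2).1
    have tv1M := (top_val hsM hkdM hk h1 h2).1
    by_cases hjk : j = k
    · subst hjk
      by_cases hr0 : mrank L (j-1) = 0
      · have hrM0 : mrank M (j-1) = 0 := by rw [← hr]; exact hr0
        have hcL := hBL hr0
        have hcM := hBM hrM0
        have heL : eps L j = 1 := by unfold eps; rw [if_pos hcL]
        have heM : eps M j = 1 := by unfold eps; rw [if_pos hcM]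
        obtain ⟨_, u0L, v0L, w0L, _⟩ := eps_one_facts hsL hpodL hkdL hk heL
        obtain ⟨_, u0M, v0M, w0M, _⟩ := eps_one_facts hsM hpodM hkdM hk heM
        refine ⟨by omega, by omega, by omega, by rw [hcL, hcM]⟩
      · have hrM0 : mrank M (j-1) ≠ 0 := by rw [← hr]; exact hr0
        have heL : eps L j = 0 := eps_zero_of_rank_ne hsL hpodL hkdL hk hr0
        have heM : eps M j = 0 := eps_zero_of_rank_ne hsM hpodM hkdM hk hrM0
        rw [if_pos rfl, heL] at fL
        rw [if_pos rfl, heM] at fM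
        have poL : (L.getD (j-1) 0) % 2 = 1 → uu L j (j+1) < uu L j j := by
          intro hmod
          have hne : L.getD (j-1) 0 ≠ 2*j - 1 := by
            intro h; unfold eps at heL; rw [if_pos h] at heL; omega
          have hbig : 2*j + 1 ≤ L.getD (j-1) 0 := by omega
          have h0 := uu_succ_k_eq_zero hsL hkdL hk
          have : 1 ≤ uu L j j := by unfold uu mrowLen; omega
          omega
        have poM : (M.getD (j-1) 0) % 2 = 1 → uu M j (j+1) < uu M j j := by
          intro hmod
          have hne : M.getD (j-1) 0 ≠ 2*j - 1 := by
            intro h; unfold eps at heM; rw [if_pos h] at heM; omega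
          have hbig : 2*j + 1 ≤ M.getD (j-1) 0 := by omega
          have h0 := uu_succ_k_eq_zero hsM hkdM hk
          have : 1 ≤ uu M j j := by unfold uu mrowLen; omega
          omega
        rw [← ihu] at uaM nbM poM
        rw [← ihv] at vaM nbM pwM
        rw [← hr] at fM
        simp only [Nat.cast_zero, add_zero] at fL fM
        have hdet := det_core (r := mrank L (j-1))
          (AL := uu L j j) (BL := vv L j j) (wL := ww L j j) (pL := L.getD (j-1) 0 % 2)
          (AM := uu M j j) (BM := vv M j j) (wM := ww M j j) (pM := M.getD (j-1) 0 % 2)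
          (A' := uu L j (j+1)) (B' := vv L j (j+1))
          fL fM uaL vaL uaM vaM
          nbL nbM poL poM pwL pwM w1L w1M
          (Nat.lt_succ_iff.1 (Nat.mod_lt _ (by norm_num)))
          (Nat.lt_succ_iff.1 (Nat.mod_lt _ (by norm_num)))
        clear fL fM nbL nbM poL poM pwL pwM uaL uaM vaL vaM hr
        obtain ⟨e1, e2, e3, e4⟩ := hdet
        exact ⟨e1, e2, e3, by omega⟩
    · rw [if_neg hjk] at fL fM
      have poL : (L.getD (j-1) 0) % 2 = 1 → uu L k (j+1) < uu L k j :=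
        fun hmod => odd_top_strict hsL hpodL hkdL hk h1 (by omega) hmod
      have poM : (M.getD (j-1) 0) % 2 = 1 → uu M k (j+1) < uu M k j :=
        fun hmod => odd_top_strict hsM hpodM hkdM hk h1 (by omega) hmod
      rw [← ihu] at uaM nbM poM
      rw [← ihv] at vaM nbM pwM
      rw [← hr] at fM
      simp only [Nat.cast_zero, add_zero] at fL fM
      have hdet := det_core (r := mrank L (j-1))
        (AL := uu L k j) (BL := vv L k j) (wL := ww L k j) (pL := L.getD (j-1) 0 % 2)
        (AM := uu M k j) (BM := vv M k j) (wM := ww M k j) (pM := M.getD (j-1) 0 % 2)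
        (A' := uu L k (j+1)) (B' := vv L k (j+1))
        fL fM uaL vaL uaM vaM
        nbL nbM poL poM pwL pwM w1L w1M
        (Nat.lt_succ_iff.1 (Nat.mod_lt _ (by norm_num)))
        (Nat.lt_succ_iff.1 (Nat.mod_lt _ (by norm_num)))
      clear fL fM nbL nbM poL poM pwL pwM uaL uaM vaL vaM hr
      obtain ⟨e1, e2, e3, e4⟩ := hdet
      exact ⟨e1, e2, e3, by omega⟩
  -- downward induction
  have KEY : ∀ t, t ≤ k → uu L k (k+1-t) = uu M k (k+1-t) ∧
      vv L k (k+1-t) = vv M k (k+1-t) ∧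
      (1 ≤ t → ww L k (k+1-t) = ww M k (k+1-t) ∧ L.getD (k-t) 0 = M.getD (k-t) 0) := by
    intro t
    induction t with
    | zero =>
      intro _
      refine ⟨?_, ?_, fun h => absurd h (by omega)⟩
      · show uu L k (k+1) = uu M k (k+1)
        rw [uu_succ_k_eq_zero hsL hkdL hk, uu_succ_k_eq_zero hsM hkdM hk]
      · show vv L k (k+1) = vv M k (k+1)
        rw [vv_succ_k_eq_zero hsL hkdL, vv_succ_k_eq_zero hsM hkdM]
    | succ t ih =>
      intro ht
      have ihh := ih (by omega)
      have hj1 : k + 1 - (t+1) = k - t := by omega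
      have hjj : (k - t) + 1 = k + 1 - t := by omega
      rw [hj1]
      have hstep := step (k - t) (by omega) (by omega)
        (by rw [hjj]; exact ihh.1) (by rw [hjj]; exact ihh.2.1)
      refine ⟨hstep.1, hstep.2.1, fun _ => ⟨hstep.2.2.1, ?_⟩⟩
      have hidx : k - (t+1) = (k - t) - 1 := by omega
      rw [hidx]
      exact hstep.2.2.2
  have hlevel : ∀ j, 1 ≤ j → j ≤ k + 1 → uu L k j = uu M k j ∧ vv L k j = vv M k j := by
    intro j hj1 hj2
    have h := KEY (k+1-j) (by omega)
    rw [(by omega : k + 1 - (k+1-j) = j)] at h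
    exact ⟨h.1, h.2.1⟩
  have hwlevel : ∀ j, 1 ≤ j → j ≤ k →
      ww L k j = ww M k j ∧ L.getD (j-1) 0 = M.getD (j-1) 0 := by
    intro j hj1 hj2
    have h := KEY (k+1-j) (by omega)
    rw [(by omega : k + 1 - (k+1-j) = j), (by omega : k - (k+1-j) = j - 1)] at h
    exact h.2.2 (by omega)
  -- lengths
  have hlen : L.length = M.length := by
    have e1 : vv L k 1 = (L.drop k).length := by
      unfold vv
      rw [List.countP_eq_length]
      intro a ha
      have := hposL a ((List.drop_sublist k L).subset ha)
      simp only [decide_eq_true_eq]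
      omega
    have e2 : vv M k 1 = (M.drop k).length := by
      unfold vv
      rw [List.countP_eq_length]
      intro a ha
      have := hposM a ((List.drop_sublist k M).subset ha)
      simp only [decide_eq_true_eq]
      omega
    have e3 := (hlevel 1 (le_refl 1) (by omega)).2
    have d1 : (L.drop k).length = L.length - k := List.length_drop
    have d2 : (M.drop k).length = M.length - k := List.length_drop
    omega
  -- the lists agree
  have htake : L.take k = M.take k := by
    apply List.ext_getElem
    · rw [List.length_take, List.length_take]; omega
    · intro t h1 h2
      rw [List.getElem_take, List.getElem_take]
      have h3 : t < k := by rw [List.length_take] at h1; omega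
      have := (hwlevel (t+1) (by omega) (by omega)).2
      simp only [Nat.add_sub_cancel] at this
      rw [← getD_eq_getElem' _ (by omega : t < L.length),
        ← getD_eq_getElem' _ (by omega : t < M.length)]
      exact this
  have hdrop : L.drop k = M.drop k := by
    apply List.Perm.eq_of_pairwise' (hsL.sublist (List.drop_sublist k L))
      (hsM.sublist (List.drop_sublist k M)) (List.perm_iff_count.2 ?_)
    intro x
    rcases Nat.eq_zero_or_pos x with rfl | hx
    · rw [List.count_eq_zero_of_not_mem, List.count_eq_zero_of_not_mem]
      · intro hmem
        have := hposM 0 ((List.drop_sublist k M).subset hmem)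
        omega
      · intro hmem
        have := hposL 0 ((List.drop_sublist k L).subset hmem)
        omega
    · by_cases hx2k : x ≤ 2*k
      · have hm1 : 1 ≤ mrowLen x := by unfold mrowLen; omega
        have hm2 : mrowLen x ≤ k := by unfold mrowLen; omega
        set m := mrowLen x with hm
        by_cases hodd : x % 2 = 1
        · have hxm : x = 2*m - 1 := by rw [hm]; unfold mrowLen; omega
          have c1 : (L.drop k).count x = ww L k m := by
            unfold ww; rw [countP_eq_count, hxm]
          have c2 : (M.drop k).count x = ww M k m := by
            unfold ww; rw [countP_eq_count, hxm]
          rw [c1, c2]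
          exact (hwlevel m hm1 hm2).1
        · have hxm : x = 2*m := by rw [hm]; unfold mrowLen; omega
          have s1 := vv_split_eq (L := L) (k := k) (Or.inr trivial) hm1
          have s2 := vv_split_eq (L := M) (k := k) (Or.inr trivial) hm1
          have c1 : (L.drop k).count x = (L.drop k).countP (fun y => y = 2*m) := by
            rw [countP_eq_count, hxm]
          have c2 : (M.drop k).count x = (M.drop k).countP (fun y => y = 2*m) := by
            rw [countP_eq_count, hxm]
          have e1 := (hlevel m hm1 (by omega)).2
          have e2 := (hlevel (m+1) (by omega) (by omega)).2
          have e3 := (hwlevel m hm1 hm2).1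
          omega
      · rw [List.count_eq_zero_of_not_mem, List.count_eq_zero_of_not_mem]
        · intro hmem
          have := bot_mem_le_2k hsM hkdM x hmem
          omega
        · intro hmem
          have := bot_mem_le_2k hsL hkdL x hmem
          omega
  calc L = L.take k ++ L.drop k := (List.take_append_drop k L).symm
    _ = M.take k ++ M.drop k := by rw [htake, hdrop]
    _ = M := List.take_append_drop k M

end Unique


section Bridge

lemma sparts_sorted {n : ℕ} (μ : n.Partition) : (sparts μ).Pairwise (· ≥ ·) :=
  Multiset.pairwise_sort _ _

lemma sparts_pos {n : ℕ} (μ : n.Partition) : ∀ x ∈ sparts μ, 0 < x := fun x hx =>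
  μ.parts_pos (by unfold sparts at hx; rwa [← Multiset.mem_coe, Multiset.sort_eq] at hx)

lemma sparts_count {n : ℕ} (μ : n.Partition) (x : ℕ) :
    (sparts μ).count x = μ.parts.count x := by
  unfold sparts
  rw [← Multiset.coe_count, Multiset.sort_eq]

lemma sparts_sum {n : ℕ} (μ : n.Partition) : (sparts μ).sum = n := by
  unfold sparts
  rw [← Multiset.sum_coe, Multiset.sort_eq, μ.parts_sum]

lemma exists_partition (L : List ℕ) (hs : L.Pairwise (· ≥ ·)) (hpos : ∀ x ∈ L, 0 < x) :
    ∃ μ : (L.sum).Partition, sparts μ = L := by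
  refine ⟨⟨(L : Multiset ℕ), fun h => hpos _ (Multiset.mem_coe.1 h), Multiset.sum_coe L⟩, ?_⟩
  unfold sparts
  exact List.Perm.eq_of_pairwise' (Multiset.pairwise_sort _ _) hs
    (Multiset.coe_eq_coe.1 (Multiset.sort_eq _ _))

lemma mranks_getD (L : List ℕ) (j : ℕ) (hj : j < mdurfee L) :
    (mranks L).getD j 0 = mrank L j := by
  unfold mranks
  rw [List.getD_eq_getElem _ _ (by rw [List.length_map, List.length_range]; omega),
    List.getElem_map, List.getElem_range]

end Bridge

theorem statement16 {n : ℕ} (μ : n.Partition) (hpod : Pod μ) (k : ℕ)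
    (hkd : mdurfee (sparts μ) = k) (hk : 1 ≤ k) :
    MinBasis μ ↔
      ((∀ i, k ≤ i → i < (sparts μ).length →
          ∀ c, k < c → mcolLen (sparts μ) c ≠ mrowLen ((sparts μ).getD i 0)) ∧
        (mrank (sparts μ) (k - 1) = 0 → (sparts μ).getD (k - 1) 0 = 2 * k - 1)) := by
  have hsL := sparts_sorted μ
  have hposL := sparts_pos μ
  have hpodL : ∀ x, Odd x → (sparts μ).count x ≤ 1 := fun x hx => by
    rw [sparts_count]; exact hpod x hx
  have hn : (sparts μ).sum = n := sparts_sum μ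
  constructor
  · intro hmin
    by_contra hcon
    have hfail : ¬ CondA (sparts μ) k ∨ ¬ CondB (sparts μ) k := by
      unfold CondA CondB
      exact not_and_or.1 hcon
    obtain ⟨L', a1, a2, a3, a4, a5⟩ := move_exists hsL hposL hpodL hkd hk hfail
    obtain ⟨μ', hμ'⟩ := exists_partition L' a1 a2
    have hpod' : Pod μ' := by
      intro x hx
      rw [← sparts_count, hμ']
      exact a3 x hx
    have := hmin.2 (L'.sum) μ' hpod' (by rw [hμ', a4])
    omega
  · rintro ⟨ha, hb⟩
    have hA : CondA (sparts μ) k := ha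
    have hB : CondB (sparts μ) k := hb
    refine ⟨hpod, ?_⟩
    have main : ∀ m : ℕ, ∀ μ' : m.Partition, Pod μ' →
        mranks (sparts μ') = mranks (sparts μ) → n ≤ m := by
      intro m
      induction m using Nat.strong_induction_on with
      | _ m ih =>
        intro μ' hpod' hranks
        have hsM := sparts_sorted μ'
        have hposM := sparts_pos μ'
        have hpodM : ∀ x, Odd x → (sparts μ').count x ≤ 1 := fun x hx => by
          rw [sparts_count]; exact hpod' x hx
        have hm : (sparts μ').sum = m := sparts_sum μ'
        have hkdM : mdurfee (sparts μ') = k := by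
          have := congrArg List.length hranks
          unfold mranks at this
          rw [List.length_map, List.length_map, List.length_range, List.length_range] at this
          rw [this, hkd]
        have hrk : ∀ j < k, mrank (sparts μ') j = mrank (sparts μ) j := by
          intro j hj
          rw [← mranks_getD (sparts μ') j (by omega), ← mranks_getD (sparts μ) j (by omega),
            hranks]
        by_cases hC : CondA (sparts μ') k ∧ CondB (sparts μ') k
        · have heq := unique_basis hsM hposM hpodM hkdM hsL hposL hpodL hkd hk
            hC.1 hC.2 hA hB hrk
          have : (sparts μ').sum = (sparts μ).sum := by rw [heq]
          omega
        · have hfail : ¬ CondA (sparts μ') k ∨ ¬ CondB (sparts μ') k := not_and_or.1 hC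
          obtain ⟨L', a1, a2, a3, a4, a5⟩ := move_exists hsM hposM hpodM hkdM hk hfail
          obtain ⟨μ'', hμ''⟩ := exists_partition L' a1 a2
          have hpod'' : Pod μ'' := by
            intro x hx
            rw [← sparts_count, hμ'']
            exact a3 x hx
          have hle := ih (L'.sum) (by omega) μ'' hpod'' (by rw [hμ'', a4, hranks])
          omega
    exact main

end BasisPartitions
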